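/- Von Neumann's minimax theorem: for every real m × n matrix A, max_{x ∈ Δ_{n−1}} min_{y ∈ Δ_{m−1}} xᵀAy = min_{y ∈ Δ_{m−1}} max_{x ∈ Δ_{n−1}} xᵀAy, where both the outer maximum/minimum and the inner minima/maxima are attained. -/

import Mathlib

/-- The bilinear payoff `xᵀAy = ∑_{i,j} x_j A_{ij} y_i` of a zero-sum matrix game. -/
noncomputable def matrixPay {m n : ℕ} (A : Matrix (Fin m) (Fin n) ℝ)
    (x : Fin n → ℝ) (y : Fin m → ℝ) : ℝ :=
  ∑ i, ∑ j, x j * A i j * y i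

namespace VNM

variable {m n : ℕ}

lemma pay_eq_row (A : Matrix (Fin m) (Fin n) ℝ) (x : Fin n → ℝ) (y : Fin m → ℝ) :
    matrixPay A x y = ∑ i, y i * ∑ j, A i j * x j := by
  unfold matrixPay
  refine Finset.sum_congr rfl fun i _ => ?_
  rw [Finset.mul_sum]
  exact Finset.sum_congr rfl fun j _ => by ring

lemma pay_eq_col (A : Matrix (Fin m) (Fin n) ℝ) (x : Fin n → ℝ) (y : Fin m → ℝ) :
    matrixPay A x y = ∑ j, x j * ∑ i, y i * A i j := by
  unfold matrixPay
  rw [Finset.sum_comm]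
  refine Finset.sum_congr rfl fun j _ => ?_
  rw [Finset.mul_sum]
  exact Finset.sum_congr rfl fun i _ => by ring

lemma pay_single_right (A : Matrix (Fin m) (Fin n) ℝ) (x : Fin n → ℝ) (i : Fin m) :
    matrixPay A x (Pi.single i 1) = ∑ j, A i j * x j := by
  rw [pay_eq_row]
  rw [Finset.sum_eq_single i (fun b _ hb => by simp [Pi.single_apply, hb]) (by simp)]
  simp

lemma pay_single_left (A : Matrix (Fin m) (Fin n) ℝ) (y : Fin m → ℝ) (j : Fin n) :
    matrixPay A (Pi.single j 1) y = ∑ i, y i * A i j := by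
  rw [pay_eq_col]
  rw [Finset.sum_eq_single j (fun b _ hb => by simp [Pi.single_apply, hb]) (by simp)]
  simp

lemma dot_ge_inf (H : (Finset.univ : Finset (Fin m)).Nonempty) (v : Fin m → ℝ)
    {y : Fin m → ℝ} (hy : y ∈ stdSimplex ℝ (Fin m)) :
    Finset.univ.inf' H v ≤ ∑ i, y i * v i := by
  calc Finset.univ.inf' H v = ∑ i, y i * Finset.univ.inf' H v := by
        rw [← Finset.sum_mul, hy.2, one_mul]
  _ ≤ ∑ i, y i * v i := Finset.sum_le_sum fun i _ =>
        mul_le_mul_of_nonneg_left (Finset.inf'_le _ (Finset.mem_univ i)) (hy.1 i)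

lemma dot_le_sup (H : (Finset.univ : Finset (Fin n)).Nonempty) (v : Fin n → ℝ)
    {x : Fin n → ℝ} (hx : x ∈ stdSimplex ℝ (Fin n)) :
    ∑ j, x j * v j ≤ Finset.univ.sup' H v := by
  calc ∑ j, x j * v j ≤ ∑ j, x j * Finset.univ.sup' H v := Finset.sum_le_sum fun j _ =>
        mul_le_mul_of_nonneg_left (Finset.le_sup' _ (Finset.mem_univ j)) (hx.1 j)
  _ = Finset.univ.sup' H v := by rw [← Finset.sum_mul, hx.2, one_mul]

end VNM

namespace VNM

lemma alternative {m n : ℕ} (hm : 0 < m) (hn : 0 < n) (B : Matrix (Fin m) (Fin n) ℝ) :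
    (∃ y ∈ stdSimplex ℝ (Fin m), ∀ j, ∑ i, y i * B i j ≤ 0) ∨
    (∃ x ∈ stdSimplex ℝ (Fin n), ∀ i, 0 < ∑ j, B i j * x j) := by
  classical
  set g : Fin m ⊕ Fin n → (Fin n → ℝ) :=
    Sum.elim (fun i => fun j => B i j) (fun j => Pi.single j 1) with hg
  let L : (Fin m ⊕ Fin n → ℝ) →ₗ[ℝ] (Fin n → ℝ) :=
    { toFun := fun w => ∑ a, w a • g a
      map_add' := by intro w1 w2; simp [add_smul, Finset.sum_add_distrib]
      map_smul' := by intro c w; simp [smul_smul, Finset.smul_sum]}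
  have Lcont : Continuous L := by
    show Continuous fun w : Fin m ⊕ Fin n → ℝ => ∑ a, w a • g a
    exact continuous_finset_sum _ fun a _ => (continuous_apply a).smul continuous_const
  set C : Set (Fin n → ℝ) := L '' stdSimplex ℝ (Fin m ⊕ Fin n) with hC
  have hCconv : Convex ℝ C := (convex_stdSimplex ℝ _).linear_image L
  have hCcl : IsClosed C :=
    ((isCompact_stdSimplex ℝ _).image Lcont).isClosed
  by_cases h0 : (0 : Fin n → ℝ) ∈ C
  · left
    obtain ⟨w, hw, hw0⟩ := h0
    have key : ∀ j, ∑ i, w (Sum.inl i) * B i j = - w (Sum.inr j) := by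
      intro j
      have h1 := congrFun hw0 j
      have h2 : (L w) j = ∑ i, w (Sum.inl i) * B i j + w (Sum.inr j) := by
        show (∑ a, w a • g a) j = _
        rw [Finset.sum_apply, Fintype.sum_sum_type]
        simp only [Pi.smul_apply, smul_eq_mul, hg, Sum.elim_inl, Sum.elim_inr]
        congr 1
        rw [Finset.sum_eq_single j (fun b _ hb => by
          simp [Pi.single_eq_of_ne (Ne.symm hb)]) (by simp)]
        simp
      rw [h2] at h1
      simp only [Pi.zero_apply] at h1
      linarith
    set s : ℝ := ∑ i, w (Sum.inl i) with hs
    have hsnn : 0 ≤ s := Finset.sum_nonneg fun i _ => hw.1 _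
    have hspos : 0 < s := by
      rcases hsnn.lt_or_eq with h | h
      · exact h
      · exfalso
        have hz : ∀ i, w (Sum.inl i) = 0 := by
          intro i
          have := (Finset.sum_eq_zero_iff_of_nonneg (fun i _ => hw.1 (Sum.inl i))).1 h.symm
          exact this i (Finset.mem_univ i)
        have hz2 : ∀ j, w (Sum.inr j) = 0 := by
          intro j
          have h3 := key j
          simp only [hz, zero_mul, Finset.sum_const_zero] at h3
          linarith
        have h4 := hw.2
        rw [Fintype.sum_sum_type] at h4
        simp [hz, hz2] at h4
    refine ⟨fun i => w (Sum.inl i) / s, ⟨fun i => div_nonneg (hw.1 _) hsnn, ?_⟩, ?_⟩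
    · rw [← Finset.sum_div, ← hs, div_self hspos.ne']
    · intro j
      have heq : ∑ i, w (Sum.inl i) / s * B i j = (∑ i, w (Sum.inl i) * B i j) / s := by
        rw [Finset.sum_div]
        exact Finset.sum_congr rfl fun i _ => by ring
      rw [heq, key j]
      exact div_nonpos_of_nonpos_of_nonneg (by simpa using hw.1 (Sum.inr j)) hsnn
  · right
    obtain ⟨f, u, hu0, hb⟩ := geometric_hahn_banach_point_closed hCconv hCcl h0
    have hu : 0 < u := by simpa using hu0
    have hga : ∀ a, u < f (g a) := by
      intro a
      have hLa : L (Pi.single a 1) = g a := by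
        have hLdef : ∀ w' : Fin m ⊕ Fin n → ℝ, L w' = ∑ a', w' a' • g a' := fun _ => rfl
        rw [hLdef]
        rw [Finset.sum_eq_single a (fun b _ hb' => by
          simp [Pi.single_eq_of_ne hb']) (by simp)]
        simp
      exact hb _ ⟨Pi.single a 1, single_mem_stdSimplex ℝ a, hLa⟩
    set x : Fin n → ℝ := fun j => f (Pi.single j 1) with hx
    have hxpos : ∀ j, 0 < x j := by
      intro j
      have := hga (Sum.inr j)
      simp only [hg, Sum.elim_inr] at this
      exact hu.trans this
    have hsingle : ∀ j : Fin n, (fun j' => if j = j' then (1:ℝ) else 0) = Pi.single j 1 := by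
      intro j; ext j'; simp [Pi.single_apply, eq_comm]
    have hfrow : ∀ i, f (fun j => B i j) = ∑ j, B i j * x j := by
      intro i
      conv_lhs => rw [pi_eq_sum_univ (fun j => B i j)]
      rw [map_sum]
      refine Finset.sum_congr rfl fun j _ => ?_
      rw [map_smul, hsingle j]
      simp [hx]
    set S : ℝ := ∑ j, x j with hS
    have hSpos : 0 < S := Finset.sum_pos (fun j _ => hxpos j) ⟨⟨0, hn⟩, Finset.mem_univ _⟩
    refine ⟨fun j => x j / S, ⟨fun j => div_nonneg (hxpos j).le hSpos.le, ?_⟩, ?_⟩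
    · rw [← Finset.sum_div, ← hS, div_self hSpos.ne']
    · intro i
      have heq : ∑ j, B i j * (x j / S) = (∑ j, B i j * x j) / S := by
        rw [Finset.sum_div]
        exact Finset.sum_congr rfl fun j _ => by ring
      rw [heq]
      apply div_pos _ hSpos
      rw [← hfrow i]
      exact hu.trans (hga (Sum.inl i))

end VNM

open VNM

/-- Von Neumann's minimax theorem: for every real `m × n` matrix `A`,
`max_{x ∈ Δ_{n-1}} min_{y ∈ Δ_{m-1}} xᵀAy = min_{y ∈ Δ_{m-1}} max_{x ∈ Δ_{n-1}} xᵀAy`,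
with all inner minima/maxima and both outer extrema attained. -/
theorem von_neumann_minimax (m n : ℕ) (hm : 1 ≤ m) (hn : 1 ≤ n)
    (A : Matrix (Fin m) (Fin n) ℝ) :
    ∃ v : ℝ,
      (∀ x ∈ stdSimplex ℝ (Fin n), ∃ y ∈ stdSimplex ℝ (Fin m),
        IsLeast {w | ∃ y' ∈ stdSimplex ℝ (Fin m), w = matrixPay A x y'} (matrixPay A x y)) ∧
      (∀ y ∈ stdSimplex ℝ (Fin m), ∃ x ∈ stdSimplex ℝ (Fin n),
        IsGreatest {w | ∃ x' ∈ stdSimplex ℝ (Fin n), w = matrixPay A x' y} (matrixPay A x y)) ∧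
      IsGreatest {w | ∃ x ∈ stdSimplex ℝ (Fin n),
        IsLeast {w' | ∃ y ∈ stdSimplex ℝ (Fin m), w' = matrixPay A x y} w} v ∧
      IsLeast {w | ∃ y ∈ stdSimplex ℝ (Fin m),
        IsGreatest {w' | ∃ x ∈ stdSimplex ℝ (Fin n), w' = matrixPay A x y} w} v := by
  classical
  have Hm : (Finset.univ : Finset (Fin m)).Nonempty := ⟨⟨0, hm⟩, Finset.mem_univ _⟩
  have Hn : (Finset.univ : Finset (Fin n)).Nonempty := ⟨⟨0, hn⟩, Finset.mem_univ _⟩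
  set g : (Fin n → ℝ) → ℝ :=
    fun x => Finset.univ.inf' Hm (fun i => ∑ j, A i j * x j) with hgdef
  set h : (Fin m → ℝ) → ℝ :=
    fun y => Finset.univ.sup' Hn (fun j => ∑ i, y i * A i j) with hhdef
  have gcont : Continuous g :=
    Continuous.finset_inf'_apply Hm fun i _ =>
      continuous_finset_sum _ fun j _ => continuous_const.mul (continuous_apply j)
  have hcont : Continuous h :=
    Continuous.finset_sup'_apply Hn fun j _ =>
      continuous_finset_sum _ fun i _ => (continuous_apply i).mul continuous_const
  obtain ⟨xs, hxs, hxmax⟩ := (isCompact_stdSimplex ℝ (Fin n)).exists_isMaxOn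
    ⟨_, single_mem_stdSimplex ℝ (⟨0, hn⟩ : Fin n)⟩ gcont.continuousOn
  obtain ⟨ys, hys, hymin⟩ := (isCompact_stdSimplex ℝ (Fin m)).exists_isMinOn
    ⟨_, single_mem_stdSimplex ℝ (⟨0, hm⟩ : Fin m)⟩ hcont.continuousOn
  set V1 : ℝ := g xs with hV1
  set V2 : ℝ := h ys with hV2
  -- weak duality
  have hweak : V1 ≤ V2 := by
    have h1 : V1 ≤ matrixPay A xs ys := by
      rw [pay_eq_row]
      exact dot_ge_inf Hm _ hys
    have h2 : matrixPay A xs ys ≤ V2 := by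
      rw [pay_eq_col]
      exact dot_le_sup Hn _ hxs
    linarith
  -- strong duality
  have heq : V1 = V2 := by
    refine le_antisymm hweak ?_
    by_contra hlt
    push_neg at hlt
    set t : ℝ := (V1 + V2) / 2 with ht
    have ht1 : V1 < t := by simp only [ht]; linarith
    have ht2 : t < V2 := by simp only [ht]; linarith
    rcases alternative hm hn (Matrix.of fun i j => A i j - t) with ⟨y, hy, hyle⟩ | ⟨x, hx, hxpos⟩
    · have hcol : ∀ j, ∑ i, y i * A i j ≤ t := by
        intro j
        have h3 := hyle j
        have h4 : ∑ i, y i * (A i j - t) = (∑ i, y i * A i j) - t := by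
          rw [Finset.sum_congr rfl (fun i _ => mul_sub (y i) (A i j) t),
            Finset.sum_sub_distrib, ← Finset.sum_mul, hy.2, one_mul]
        simp only [Matrix.of_apply] at h3
        rw [h4] at h3
        linarith
      have h5 : h y ≤ t := Finset.sup'_le _ _ fun j _ => hcol j
      have h6 : V2 ≤ h y := hymin hy
      linarith
    · have hrow : ∀ i, t < ∑ j, A i j * x j := by
        intro i
        have h3 := hxpos i
        have h4 : ∑ j, (A i j - t) * x j = (∑ j, A i j * x j) - t := by
          rw [Finset.sum_congr rfl (fun j _ => sub_mul (A i j) t (x j)),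
            Finset.sum_sub_distrib, ← Finset.mul_sum, hx.2, mul_one]
        simp only [Matrix.of_apply] at h3
        rw [h4] at h3
        linarith
      have h5 : t ≤ g x := Finset.le_inf' _ _ fun i _ => (hrow i).le
      have h6 : g x ≤ V1 := hxmax hx
      linarith
  refine ⟨V1, ?_, ?_, ?_, ?_⟩
  · -- inner minima attained
    intro x hx
    obtain ⟨i₀, _, hi₀⟩ := Finset.exists_mem_eq_inf' Hm (fun i => ∑ j, A i j * x j)
    refine ⟨Pi.single i₀ 1, single_mem_stdSimplex ℝ i₀, ?_, ?_⟩
    · exact ⟨Pi.single i₀ 1, single_mem_stdSimplex ℝ i₀, rfl⟩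
    · rintro w ⟨y', hy', rfl⟩
      rw [pay_single_right, pay_eq_row]
      calc ∑ j, A i₀ j * x j = Finset.univ.inf' Hm (fun i => ∑ j, A i j * x j) := hi₀.symm
      _ ≤ ∑ i, y' i * ∑ j, A i j * x j := dot_ge_inf Hm _ hy'
  · -- inner maxima attained
    intro y hy
    obtain ⟨j₀, _, hj₀⟩ := Finset.exists_mem_eq_sup' Hn (fun j => ∑ i, y i * A i j)
    refine ⟨Pi.single j₀ 1, single_mem_stdSimplex ℝ j₀, ?_, ?_⟩
    · exact ⟨Pi.single j₀ 1, single_mem_stdSimplex ℝ j₀, rfl⟩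
    · rintro w ⟨x', hx', rfl⟩
      rw [pay_single_left, pay_eq_col]
      calc ∑ j, x' j * ∑ i, y i * A i j ≤ Finset.univ.sup' Hn (fun j => ∑ i, y i * A i j) :=
            dot_le_sup Hn _ hx'
      _ = ∑ i, y i * A i j₀ := hj₀
  · -- outer max
    constructor
    · obtain ⟨i₀, _, hi₀⟩ := Finset.exists_mem_eq_inf' Hm (fun i => ∑ j, A i j * xs j)
      refine ⟨xs, hxs, ?_, ?_⟩
      · refine ⟨Pi.single i₀ 1, single_mem_stdSimplex ℝ i₀, ?_⟩
        rw [pay_single_right]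
        exact hi₀
      · rintro w ⟨y', hy', rfl⟩
        rw [pay_eq_row]
        exact dot_ge_inf Hm _ hy'
    · rintro w ⟨x, hx, hwmem, hwlb⟩
      have hle : ∀ i, w ≤ ∑ j, A i j * x j := by
        intro i
        have := hwlb ⟨Pi.single i 1, single_mem_stdSimplex ℝ i, (pay_single_right A x i).symm⟩
        exact this
      have h5 : w ≤ g x := Finset.le_inf' _ _ fun i _ => hle i
      exact h5.trans (hxmax hx)
  · -- outer min
    rw [heq]
    constructor
    · obtain ⟨j₀, _, hj₀⟩ := Finset.exists_mem_eq_sup' Hn (fun j => ∑ i, ys i * A i j)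
      refine ⟨ys, hys, ?_, ?_⟩
      · refine ⟨Pi.single j₀ 1, single_mem_stdSimplex ℝ j₀, ?_⟩
        rw [pay_single_left]
        exact hj₀
      · rintro w ⟨x', hx', rfl⟩
        rw [pay_eq_col]
        exact dot_le_sup Hn _ hx'
    · rintro w ⟨y, hy, hwmem, hwub⟩
      have hle : ∀ j, ∑ i, y i * A i j ≤ w := by
        intro j
        exact hwub ⟨Pi.single j 1, single_mem_stdSimplex ℝ j, (pay_single_left A y j).symm⟩
      have h5 : h y ≤ w := Finset.sup'_le _ _ fun j _ => hle j
      exact (hymin hy).trans h5
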